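/- Under the same hypotheses, the pseudo-inverses satisfy ||Ŵ† − W†||_op ≤ ||W†||_op · √(1 + ε̃) · ε̃/(1 − ε̃), where W† denotes the Moore–Penrose pseudoinverse and ||W†||_op = √(σ_1(A)). -/

import Mathlib

open Matrix

/-- The ℓ²→ℓ² operator norm (spectral norm) of a real rectangular matrix. -/
noncomputable def opNorm {m n : ℕ} (A : Matrix (Fin m) (Fin n) ℝ) : ℝ :=
  ‖LinearMap.toContinuousLinearMap
      (Matrix.toLin (EuclideanSpace.basisFun (Fin n) ℝ).toBasis
        (EuclideanSpace.basisFun (Fin m) ℝ).toBasis A)‖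

/-- Eigenvalues of a real matrix (junk value `0` if not symmetric). -/
noncomputable def eigVals {d : ℕ} (A : Matrix (Fin d) (Fin d) ℝ) : Fin d → ℝ :=
  if h : A.IsHermitian then h.eigenvalues else 0

/-- `sval A j` is the `(j+1)`-th largest eigenvalue of the symmetric matrix `A`;
for a positive semidefinite matrix this is the `(j+1)`-th largest singular value. -/
noncomputable def sval {d : ℕ} (A : Matrix (Fin d) (Fin d) ℝ) (j : Fin d) : ℝ :=
  (eigVals A ∘ Tuple.sort (eigVals A)) j.rev

/-- `B` is the Moore–Penrose pseudoinverse of `A` (four Penrose conditions). -/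
def IsMoorePenrose {m n : ℕ} (A : Matrix (Fin m) (Fin n) ℝ)
    (B : Matrix (Fin n) (Fin m) ℝ) : Prop :=
  A * B * A = A ∧ B * A * B = B ∧ (A * B)ᵀ = A * B ∧ (B * A)ᵀ = B * A


open scoped Matrix.Norms.L2Operator

lemma opNorm_eq {m n : ℕ} (A : Matrix (Fin m) (Fin n) ℝ) : opNorm A = ‖A‖ := rfl

lemma eigVals_eq {d : ℕ} {A : Matrix (Fin d) (Fin d) ℝ} (hA : A.IsHermitian) :
    eigVals A = hA.eigenvalues := dif_pos hA

lemma norm_one_mat {k : ℕ} (hk : 0 < k) : ‖(1 : Matrix (Fin k) (Fin k) ℝ)‖ = 1 := by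
  haveI : Nontrivial (EuclideanSpace ℝ (Fin k)) :=
    Module.nontrivial_of_finrank_pos (R := ℝ) (by simpa using hk)
  rw [Matrix.cstar_norm_def, _root_.map_one]
  exact ContinuousLinearMap.norm_id

-- quadratic form bound
lemma quad_abs_le {n : ℕ} (M : Matrix (Fin n) (Fin n) ℝ) (x : Fin n → ℝ) :
    |x ⬝ᵥ (M *ᵥ x)| ≤ ‖M‖ * (x ⬝ᵥ x) := by
  set x' : EuclideanSpace ℝ (Fin n) := (WithLp.equiv 2 (Fin n → ℝ)).symm x with hx'
  have h1 : (inner ℝ x' ((WithLp.equiv 2 (Fin n → ℝ)).symm (M *ᵥ x)) : ℝ) = x ⬝ᵥ (M *ᵥ x) := by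
    simp [PiLp.inner_apply, dotProduct, x']
    exact Finset.sum_congr rfl fun _ _ => mul_comm _ _
  have h2 : (x ⬝ᵥ x) = ‖x'‖ ^ 2 := by
    rw [← real_inner_self_eq_norm_sq, PiLp.inner_apply]
    simp [dotProduct, x', sq]
  rw [← h1, h2]
  calc |(inner ℝ x' ((WithLp.equiv 2 (Fin n → ℝ)).symm (M *ᵥ x)) : ℝ)|
      ≤ ‖x'‖ * ‖(WithLp.equiv 2 (Fin n → ℝ)).symm (M *ᵥ x)‖ := abs_real_inner_le_norm _ _
    _ ≤ ‖x'‖ * (‖M‖ * ‖x'‖) := by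
        have hb : ‖(WithLp.equiv 2 (Fin n → ℝ)).symm (M *ᵥ x)‖ ≤ ‖M‖ * ‖x'‖ :=
          M.l2_opNorm_mulVec x'
        have := norm_nonneg x'
        nlinarith [norm_nonneg ((WithLp.equiv 2 (Fin n → ℝ)).symm (M *ᵥ x))]
    _ = ‖M‖ * ‖x'‖ ^ 2 := by ring

-- norm sq of mulVec
lemma mulVec_dot_le {m n : ℕ} (B : Matrix (Fin m) (Fin n) ℝ) (x : Fin n → ℝ) :
    (B *ᵥ x) ⬝ᵥ (B *ᵥ x) ≤ ‖B‖ ^ 2 * (x ⬝ᵥ x) := by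
  set x' : EuclideanSpace ℝ (Fin n) := (WithLp.equiv 2 (Fin n → ℝ)).symm x with hx'
  have h2 : (x ⬝ᵥ x) = ‖x'‖ ^ 2 := by
    rw [← real_inner_self_eq_norm_sq, PiLp.inner_apply]; simp [dotProduct, x', sq]
  have h3 : (B *ᵥ x) ⬝ᵥ (B *ᵥ x) = ‖(WithLp.equiv 2 (Fin m → ℝ)).symm (B *ᵥ x)‖ ^ 2 := by
    rw [← real_inner_self_eq_norm_sq, PiLp.inner_apply]; simp [dotProduct, sq]
  rw [h2, h3]
  have := B.l2_opNorm_mulVec x'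
  have h4 : ‖(WithLp.equiv 2 (Fin m → ℝ)).symm (B *ᵥ x)‖ ≤ ‖B‖ * ‖x'‖ := this
  calc ‖(WithLp.equiv 2 (Fin m → ℝ)).symm (B *ᵥ x)‖ ^ 2 ≤ (‖B‖ * ‖x'‖) ^ 2 := by
        apply sq_le_sq' _ h4; nlinarith [norm_nonneg ((WithLp.equiv 2 (Fin m → ℝ)).symm (B *ᵥ x))]
    _ = ‖B‖ ^ 2 * ‖x'‖ ^ 2 := by ring

-- diagonal entry of BᵀMB
lemma diag_entry {m n : ℕ} (B : Matrix (Fin m) (Fin n) ℝ) (M : Matrix (Fin m) (Fin m) ℝ)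
    (i : Fin n) :
    (Bᵀ * M * B) i i = (fun j => B j i) ⬝ᵥ (M *ᵥ fun j => B j i) := by
  simp only [mul_apply, transpose_apply, dotProduct, mulVec, dotProduct, Finset.sum_mul,
    Finset.mul_sum]
  rw [Finset.sum_comm]
  congr 1; ext j; congr 1; ext l; ring

-- diagonal matrix norm bound
lemma diagonal_norm_le {n : ℕ} (v : Fin n → ℝ) (c : ℝ) (hc : 0 ≤ c) (h : ∀ i, |v i| ≤ c) :
    ‖(Matrix.diagonal v : Matrix (Fin n) (Fin n) ℝ)‖ ≤ c := by
  rw [Matrix.l2_opNorm_def]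
  apply ContinuousLinearMap.opNorm_le_bound _ hc
  intro x
  have hx : ∀ (y : EuclideanSpace ℝ (Fin n)), ‖y‖ = Real.sqrt (∑ i, (y i)^2) := by
    intro y; rw [EuclideanSpace.norm_eq]; simp [Real.norm_eq_abs, sq_abs]
  rw [hx, hx]
  rw [← Real.sqrt_sq hc, ← Real.sqrt_mul (by positivity)]
  apply Real.sqrt_le_sqrt
  have hdiag : ∀ i : Fin n,
      (((Matrix.toEuclideanLin ≪≫ₗ LinearMap.toContinuousLinearMap) (Matrix.diagonal v)) x) i
      = v i * x i := by
    intro i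
    simp [Matrix.toEuclideanLin_apply, Matrix.mulVec_diagonal]
  rw [Finset.mul_sum]
  apply Finset.sum_le_sum
  intro i _
  rw [hdiag i]
  have h1 := h i
  have h2 : (v i)^2 ≤ c^2 := by nlinarith [sq_abs (v i), abs_nonneg (v i)]
  nlinarith [sq_nonneg (x i), h2]
variable {d : ℕ}

lemma toEuclideanLin_eigenvector (M : Matrix (Fin d) (Fin d) ℝ) (hM : M.IsHermitian) (i : Fin d) :
    Matrix.toEuclideanLin M (hM.eigenvectorBasis i) = hM.eigenvalues i • hM.eigenvectorBasis i := by
  have h := hM.mulVec_eigenvectorBasis i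
  apply (WithLp.equiv 2 (Fin d → ℝ)).injective
  funext j
  exact congrFun h j

lemma quad_repr (M : Matrix (Fin d) (Fin d) ℝ) (hM : M.IsHermitian)
    (x : EuclideanSpace ℝ (Fin d)) :
    (inner ℝ x (Matrix.toEuclideanLin M x) : ℝ)
      = ∑ i, hM.eigenvalues i * (inner ℝ (hM.eigenvectorBasis i) x : ℝ)^2 := by
  have hsym : (Matrix.toEuclideanLin M).IsSymmetric :=
    Matrix.isHermitian_iff_isSymmetric.mp hM
  rw [← OrthonormalBasis.sum_inner_mul_inner hM.eigenvectorBasis x (Matrix.toEuclideanLin M x)]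
  apply Finset.sum_congr rfl
  intro i _
  rw [← hsym (hM.eigenvectorBasis i) x, toEuclideanLin_eigenvector M hM i,
    real_inner_smul_left, real_inner_comm x]
  ring

lemma norm_repr (b : OrthonormalBasis (Fin d) ℝ (EuclideanSpace ℝ (Fin d)))
    (x : EuclideanSpace ℝ (Fin d)) :
    ‖x‖^2 = ∑ i, (inner ℝ (b i) x : ℝ)^2 := by
  rw [← real_inner_self_eq_norm_sq, ← OrthonormalBasis.sum_inner_mul_inner b x x]
  apply Finset.sum_congr rfl
  intro i _
  rw [real_inner_comm x]; ring

lemma coeff_vanish (b : OrthonormalBasis (Fin d) ℝ (EuclideanSpace ℝ (Fin d)))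
    (s : Finset (Fin d)) (x : EuclideanSpace ℝ (Fin d))
    (hx : x ∈ Submodule.span ℝ (Set.range (fun i : s => b i)))
    {i : Fin d} (hi : i ∉ s) : (inner ℝ (b i) x : ℝ) = 0 := by
  induction hx using Submodule.span_induction with
  | mem y hy =>
      obtain ⟨⟨j, hj⟩, rfl⟩ := hy
      exact b.orthonormal.2 (fun h : i = j => hi (h ▸ hj))
  | zero => simp
  | add y z hy hz ihy ihz => rw [inner_add_right, ihy, ihz]; ring
  | smul a y hy ih => rw [real_inner_smul_right, ih]; ring

lemma span_dim (b : OrthonormalBasis (Fin d) ℝ (EuclideanSpace ℝ (Fin d))) (s : Finset (Fin d)) :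
    Module.finrank ℝ (Submodule.span ℝ (Set.range (fun i : s => b i))) = s.card := by
  have hli : LinearIndependent ℝ (fun i : s => b i) :=
    (b.orthonormal.linearIndependent).comp Subtype.val Subtype.val_injective
  rw [finrank_span_eq_card hli, Fintype.card_coe]

lemma exists_nonzero_inf (S T : Submodule ℝ (EuclideanSpace ℝ (Fin d)))
    (h : d < Module.finrank ℝ S + Module.finrank ℝ T) :
    ∃ x, x ∈ S ⊓ T ∧ x ≠ 0 := by
  have h1 := Submodule.finrank_sup_add_finrank_inf_eq S T
  have h2 : Module.finrank ℝ ↥(S ⊔ T) ≤ d := by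
    have := Submodule.finrank_le (S ⊔ T)
    simpa using this
  have h3 : 0 < Module.finrank ℝ ↥(S ⊓ T) := by omega
  haveI : Nontrivial ↥(S ⊓ T) := Module.nontrivial_of_finrank_pos h3
  obtain ⟨y, hy⟩ := exists_ne (0 : ↥(S ⊓ T))
  exact ⟨(y : EuclideanSpace ℝ (Fin d)), y.2, by simpa [Submodule.coe_eq_zero] using hy⟩
lemma inner_toEuclideanLin (M : Matrix (Fin d) (Fin d) ℝ) (x : EuclideanSpace ℝ (Fin d)) :
    (inner ℝ x (Matrix.toEuclideanLin M x) : ℝ)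
      = (WithLp.equiv 2 (Fin d → ℝ) x) ⬝ᵥ (M *ᵥ (WithLp.equiv 2 (Fin d → ℝ) x)) := by
  simp [PiLp.inner_apply, Matrix.toEuclideanLin_apply, dotProduct]
  exact Finset.sum_congr rfl fun _ _ => mul_comm _ _

lemma norm_sq_dot (x : EuclideanSpace ℝ (Fin d)) :
    ‖x‖^2 = (WithLp.equiv 2 (Fin d → ℝ) x) ⬝ᵥ (WithLp.equiv 2 (Fin d → ℝ) x) := by
  rw [← real_inner_self_eq_norm_sq, PiLp.inner_apply]
  simp [dotProduct, sq]

lemma weyl_lower (A Ahat : Matrix (Fin d) (Fin d) ℝ) (hA : A.IsHermitian)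
    (hAhat : Ahat.IsHermitian) (j : Fin d) :
    sval A j - ‖Ahat - A‖ ≤ sval Ahat j := by
  classical
  set f : Fin d → ℝ := eigVals A with hfdef
  set fh : Fin d → ℝ := eigVals Ahat with hfhdef
  set π : Equiv.Perm (Fin d) := Tuple.sort f with hπdef
  set πh : Equiv.Perm (Fin d) := Tuple.sort fh with hπhdef
  have hmono : Monotone (f ∘ π) := Tuple.monotone_sort f
  have hmonoh : Monotone (fh ∘ πh) := Tuple.monotone_sort fh
  have hsvalA : sval A j = f (π j.rev) := rfl
  have hsvalAh : sval Ahat j = fh (πh j.rev) := rfl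
  set b := hA.eigenvectorBasis with hbdef
  set bh := hAhat.eigenvectorBasis with hbhdef
  set sA : Finset (Fin d) := (Finset.Ici j.rev).image π with hsAdef
  set sT : Finset (Fin d) := (Finset.Iic j.rev).image πh with hsTdef
  set S := Submodule.span ℝ (Set.range (fun i : sA => b i)) with hSdef
  set T := Submodule.span ℝ (Set.range (fun i : sT => bh i)) with hTdef
  have hcardA : sA.card = d - j.rev := by
    rw [hsAdef, Finset.card_image_of_injective _ π.injective, Fin.card_Ici]
  have hcardT : sT.card = j.rev + 1 := by
    rw [hsTdef, Finset.card_image_of_injective _ πh.injective, Fin.card_Iic]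
  have hdim : d < Module.finrank ℝ S + Module.finrank ℝ T := by
    rw [hSdef, hTdef, span_dim, span_dim, hcardA, hcardT]
    have := j.rev.isLt
    omega
  obtain ⟨x, hxST, hx0⟩ := exists_nonzero_inf S T hdim
  have hxS : x ∈ S := hxST.1
  have hxT : x ∈ T := hxST.2
  have hnorm0 : ‖x‖ ≠ 0 := fun h => hx0 (norm_eq_zero.mp h)
  have hnx : (0:ℝ) < ‖x‖^2 := by positivity
  -- lower bound for A
  have bound1 : sval A j * ‖x‖^2 ≤ (inner ℝ x (Matrix.toEuclideanLin A x) : ℝ) := by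
    rw [quad_repr A hA x, norm_repr b x, Finset.mul_sum]
    apply Finset.sum_le_sum
    intro i _
    by_cases hi : i ∈ sA
    · obtain ⟨l, hl, rfl⟩ := Finset.mem_image.mp hi
      have : sval A j ≤ hA.eigenvalues (π l) := by
        rw [hsvalA, ← eigVals_eq hA]
        exact hmono (Finset.mem_Ici.mp hl)
      exact mul_le_mul_of_nonneg_right this (sq_nonneg _)
    · rw [coeff_vanish b sA x hxS hi]
      simp
  -- upper bound for Ahat
  have bound2 : (inner ℝ x (Matrix.toEuclideanLin Ahat x) : ℝ) ≤ sval Ahat j * ‖x‖^2 := by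
    rw [quad_repr Ahat hAhat x, norm_repr bh x, Finset.mul_sum]
    apply Finset.sum_le_sum
    intro i _
    by_cases hi : i ∈ sT
    · obtain ⟨l, hl, rfl⟩ := Finset.mem_image.mp hi
      have : hAhat.eigenvalues (πh l) ≤ sval Ahat j := by
        rw [hsvalAh, ← eigVals_eq hAhat]
        exact hmonoh (Finset.mem_Iic.mp hl)
      exact mul_le_mul_of_nonneg_right this (sq_nonneg _)
    · rw [coeff_vanish bh sT x hxT hi]
      simp
  -- perturbation bound
  have bound3 : |(inner ℝ x (Matrix.toEuclideanLin (Ahat - A) x) : ℝ)| ≤ ‖Ahat - A‖ * ‖x‖^2 := by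
    rw [inner_toEuclideanLin, norm_sq_dot]
    exact quad_abs_le (Ahat - A) _
  have hsplit : (inner ℝ x (Matrix.toEuclideanLin Ahat x) : ℝ)
      = (inner ℝ x (Matrix.toEuclideanLin A x) : ℝ)
        + (inner ℝ x (Matrix.toEuclideanLin (Ahat - A) x) : ℝ) := by
    have : Matrix.toEuclideanLin Ahat x
        = Matrix.toEuclideanLin A x + Matrix.toEuclideanLin (Ahat - A) x := by
      rw [map_sub]
      simp
    rw [this, inner_add_right]
  have habs := abs_le.mp bound3
  have key : (sval A j - ‖Ahat - A‖) * ‖x‖^2 ≤ sval Ahat j * ‖x‖^2 := by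
    nlinarith [bound1, bound2, habs.1, hsplit]
  exact le_of_mul_le_mul_right key hnx
lemma km1_lt {d k : ℕ} (hk : 0 < k) (hkd : k ≤ d) : k - 1 < d := by omega

lemma sval_pos {d k : ℕ} (hk : 0 < k) (hkd : k ≤ d) (A : Matrix (Fin d) (Fin d) ℝ)
    (hA : A.PosSemidef) (hrank : A.rank = k) :
    0 < sval A ⟨k - 1, km1_lt hk hkd⟩ := by
  classical
  have hH : A.IsHermitian := hA.1
  set f : Fin d → ℝ := eigVals A with hfdef
  set π : Equiv.Perm (Fin d) := Tuple.sort f with hπdef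
  have hmono : Monotone (f ∘ π) := Tuple.monotone_sort f
  have hnonneg : ∀ i, 0 ≤ f i := by
    intro i; rw [hfdef, eigVals_eq hH]; exact hA.eigenvalues_nonneg i
  set r : Fin d := (⟨k - 1, km1_lt hk hkd⟩ : Fin d).rev with hrdef
  have hrval : (r : ℕ) = d - k := by
    simp [hrdef, Fin.rev]
    omega
  have hcard : Fintype.card {i // f i ≠ 0} = k := by
    rw [hfdef, eigVals_eq hH, ← hH.rank_eq_card_non_zero_eigs, hrank]
  by_contra hle
  push_neg at hle
  have hzero : f (π r) = 0 := le_antisymm (by exact hle) (hnonneg _)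
  have himp : ∀ i : Fin d, f (π i) ≠ 0 → r < i := by
    intro i hi
    by_contra hri
    push_neg at hri
    exact hi (le_antisymm (hzero ▸ hmono hri) (hnonneg _))
  have hcard2 : Fintype.card {i // f (π i) ≠ 0} = k := by
    rw [← hcard]
    exact Fintype.card_congr (π.subtypeEquiv (fun i => by simp))
  have hle2 : Fintype.card {i // f (π i) ≠ 0} ≤ Fintype.card {i : Fin d // r < i} :=
    Fintype.card_subtype_mono _ _ himp
  have hcard3 : Fintype.card {i : Fin d // r < i} = d - 1 - r := by
    rw [Fintype.card_subtype]
    have : Finset.filter (fun i => r < i) Finset.univ = Finset.Ioi r := by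
      ext i; simp
    rw [this, Fin.card_Ioi]
  omega
lemma mp_unique {m n : ℕ} (A : Matrix (Fin m) (Fin n) ℝ) (B C : Matrix (Fin n) (Fin m) ℝ)
    (hB : IsMoorePenrose A B) (hC : IsMoorePenrose A C) : B = C := by
  obtain ⟨hB1, hB2, hB3, hB4⟩ := hB
  obtain ⟨hC1, hC2, hC3, hC4⟩ := hC
  have e1 : A * B = A * C := by
    calc A * B = (A * C * A) * B := by rw [hC1]
      _ = (A * C) * (A * B) := by rw [Matrix.mul_assoc]
      _ = (A * C)ᵀ * (A * B)ᵀ := by rw [hC3, hB3]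
      _ = ((A * B) * (A * C))ᵀ := by simp [transpose_mul, Matrix.mul_assoc]
      _ = ((A * B * A) * C)ᵀ := by simp [Matrix.mul_assoc]
      _ = (A * C)ᵀ := by rw [hB1]
      _ = A * C := hC3
  have e2 : B * A = C * A := by
    calc B * A = B * (A * C * A) := by rw [hC1]
      _ = (B * A) * (C * A) := by simp [Matrix.mul_assoc]
      _ = (B * A)ᵀ * (C * A)ᵀ := by rw [hB4, hC4]
      _ = ((C * A) * (B * A))ᵀ := by simp [transpose_mul, Matrix.mul_assoc]
      _ = (C * (A * B * A))ᵀ := by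
            rw [Matrix.mul_assoc C A (B * A), Matrix.mul_assoc A B A]
      _ = (C * A)ᵀ := by rw [hB1]
      _ = C * A := hC4
  calc B = B * A * B := hB2.symm
    _ = B * (A * C) := by rw [Matrix.mul_assoc, e1]
    _ = (B * A) * C := by rw [Matrix.mul_assoc]
    _ = (C * A) * C := by rw [e2]
    _ = C := hC2

lemma left_inv_dag {d k : ℕ} (W : Matrix (Fin d) (Fin k) ℝ) (Wdag : Matrix (Fin k) (Fin d) ℝ)
    (L : Matrix (Fin k) (Fin d) ℝ) (hL : L * W = 1) (h1 : W * Wdag * W = W) :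
    Wdag * W = 1 := by
  have := congrArg (fun X => L * X) h1
  simp only [← Matrix.mul_assoc] at this
  rw [hL] at this
  simpa using this
lemma inv_sqrt_close {t δ : ℝ} (hδ0 : 0 ≤ δ) (hδ : δ < 1/2) (ht : |t - 1| ≤ δ) :
    |(Real.sqrt t)⁻¹ - 1| ≤ δ := by
  obtain ⟨h1, h2⟩ := abs_le.mp ht
  have ht1 : 1 - δ ≤ t := by linarith
  have ht2 : t ≤ 1 + δ := by linarith
  have htpos : 0 < t := by linarith
  set s := Real.sqrt t with hs
  have hspos : 0 < s := Real.sqrt_pos.mpr htpos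
  have hssq : s^2 = t := Real.sq_sqrt htpos.le
  rw [abs_le]
  constructor
  · -- -δ ≤ s⁻¹ - 1  ⟺  (1-δ) s ≤ 1
    have key : (1 - δ) * s ≤ 1 := by nlinarith [sq_nonneg (s - 1)]
    have : 1 - δ ≤ s⁻¹ := by
      rw [← one_div, le_div_iff₀ hspos]
      exact key
    linarith
  · -- s⁻¹ - 1 ≤ δ  ⟺  1 ≤ (1+δ) s
    have haux : 0 ≤ δ * (1 - δ - δ^2) := mul_nonneg hδ0 (by nlinarith)
    have hX2 : 1 ≤ ((1 + δ) * s)^2 := by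
      nlinarith [mul_nonneg (sq_nonneg (1+δ)) (sub_nonneg.mpr ht1), haux, hssq]
    have key : 1 ≤ (1 + δ) * s := by nlinarith [mul_pos (by linarith : (0:ℝ) < 1 + δ) hspos]
    have : s⁻¹ ≤ 1 + δ := by
      rw [inv_eq_one_div, div_le_iff₀ hspos]
      linarith [key]
    linarith

set_option maxHeartbeats 1000000 in
/-- Under the hypotheses of the whitening perturbation lemma, the Moore–Penrose
pseudoinverses of the whitening matrices satisfy
`‖Ŵ† − W†‖_op ≤ ‖W†‖_op · √(1 + ε̃) · ε̃/(1 − ε̃)`. -/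
theorem unwhitening_perturbation {d k : ℕ} (hk : 0 < k) (hkd : k ≤ d)
    (A Ahat : Matrix (Fin d) (Fin d) ℝ) (What : Matrix (Fin d) (Fin k) ℝ)
    (U : Matrix (Fin k) (Fin k) ℝ) (dvec : Fin k → ℝ)
    (hA : A.PosSemidef) (hrank : A.rank = k) (hAhat : Ahat.PosSemidef)
    (σk εt : ℝ)
    (hσk : σk = sval A ⟨k - 1, by omega⟩)
    (hεt : εt = opNorm (Ahat - A) / σk)
    (hεlt : εt < 1 / 3)
    (hwhiten : Whatᵀ * Ahat * What = 1)
    (hWnorm : opNorm What = (Real.sqrt (sval Ahat ⟨k - 1, by omega⟩))⁻¹)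
    (hU : Uᵀ * U = 1)
    (hdecomp : Whatᵀ * A * What = U * Matrix.diagonal dvec * Uᵀ)
    (W : Matrix (Fin d) (Fin k) ℝ)
    (hW : W = What * U * Matrix.diagonal (fun i => (Real.sqrt (dvec i))⁻¹) * Uᵀ)
    (Wdag Whatdag : Matrix (Fin k) (Fin d) ℝ)
    (hWdag : IsMoorePenrose W Wdag)
    (hWhatdag : IsMoorePenrose What Whatdag) :
    opNorm (Whatdag - Wdag)
      ≤ opNorm Wdag * Real.sqrt (1 + εt) * (εt / (1 - εt)) := by
  classical
  have hH : A.IsHermitian := hA.1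
  have hHh : Ahat.IsHermitian := hAhat.1
  have hσpos : 0 < σk := by rw [hσk]; exact sval_pos hk hkd A hA hrank
  have hEnorm : ‖Ahat - A‖ = εt * σk := by
    rw [hεt, ← opNorm_eq]; field_simp
  have hεnn : 0 ≤ εt := by
    rw [hεt]
    apply div_nonneg _ hσpos.le
    rw [opNorm_eq]; exact norm_nonneg _
  have h1ε : 0 < 1 - εt := by linarith
  set σh : ℝ := sval Ahat ⟨k - 1, by omega⟩ with hσh
  have hweyl : σk - εt * σk ≤ σh := by
    rw [← hEnorm, hσk, hσh]
    exact weyl_lower A Ahat hH hHh ⟨k - 1, by omega⟩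
  have hσhpos : 0 < σh := by nlinarith [mul_pos hσpos h1ε]
  have hWsq : ‖What‖ ^ 2 = σh⁻¹ := by
    have h0 : opNorm What = (Real.sqrt σh)⁻¹ := hWnorm
    rw [opNorm_eq] at h0
    rw [h0, inv_pow, Real.sq_sqrt hσhpos.le]
  set δ := εt / (1 - εt) with hδdef
  have hδ0 : 0 ≤ δ := div_nonneg hεnn h1ε.le
  have hδhalf : δ < 1 / 2 := by
    rw [hδdef, div_lt_iff₀ h1ε]; linarith
  have hUU : U * Uᵀ = 1 := mul_eq_one_comm.mp hU
  have hkey : Uᵀ * (Whatᵀ * (A - Ahat) * What) * U = Matrix.diagonal dvec - 1 := by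
    have h1 : Whatᵀ * (A - Ahat) * What = U * Matrix.diagonal dvec * Uᵀ - 1 := by
      rw [Matrix.mul_sub, Matrix.sub_mul, hdecomp, hwhiten]
    rw [h1, Matrix.mul_sub, Matrix.sub_mul]
    congr 1
    · calc Uᵀ * (U * Matrix.diagonal dvec * Uᵀ) * U
          = (Uᵀ * U) * Matrix.diagonal dvec * (Uᵀ * U) := by simp only [Matrix.mul_assoc]
        _ = Matrix.diagonal dvec := by rw [hU, Matrix.one_mul, Matrix.mul_one]
    · rw [Matrix.mul_one, hU]
  have hdbound : ∀ i, |dvec i - 1| ≤ δ := by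
    intro i
    set u : Fin k → ℝ := fun l => U l i with hu
    set y : Fin d → ℝ := What *ᵥ u with hy
    have hyentry : (fun j => (What * U) j i) = y := by
      funext j; rw [hy, Matrix.mul_apply]; rfl
    have h2 : Uᵀ * (Whatᵀ * (A - Ahat) * What) * U
        = (What * U)ᵀ * (A - Ahat) * (What * U) := by
      rw [Matrix.transpose_mul]; simp only [Matrix.mul_assoc]
    have h3 := congrArg (fun X => X i i) hkey
    rw [h2, diag_entry, hyentry] at h3
    have h4 : (Matrix.diagonal dvec - 1) i i = dvec i - 1 := by
      simp [Matrix.sub_apply, Matrix.diagonal_apply_eq, Matrix.one_apply_eq]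
    rw [h4] at h3
    have hentry : dvec i - 1 = y ⬝ᵥ ((A - Ahat) *ᵥ y) := h3.symm
    have huu : u ⬝ᵥ u = 1 := by
      have h5 := congrArg (fun X => X i i) hU
      have h6 : (Uᵀ * U) i i = u ⬝ᵥ u := by
        rw [Matrix.mul_apply]; rfl
      rw [h6] at h5
      rw [h5, Matrix.one_apply_eq]
    have hyy : y ⬝ᵥ y ≤ σh⁻¹ := by
      have h7 := mulVec_dot_le What u
      rw [huu, mul_one, hWsq] at h7
      exact h7
    have habs : |y ⬝ᵥ ((A - Ahat) *ᵥ y)| ≤ ‖A - Ahat‖ * (y ⬝ᵥ y) := quad_abs_le _ _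
    have hnegnorm : ‖A - Ahat‖ = εt * σk := by
      rw [show A - Ahat = -(Ahat - A) from (neg_sub _ _).symm, norm_neg, hEnorm]
    have step1 : |dvec i - 1| ≤ (εt * σk) * σh⁻¹ := by
      rw [hentry]
      refine habs.trans ?_
      rw [hnegnorm]
      exact mul_le_mul_of_nonneg_left hyy (by positivity)
    refine step1.trans ?_
    have hc : σk * σh⁻¹ ≤ (1 - εt)⁻¹ := by
      have h8 : (1 - εt) * σk ≤ σh := by nlinarith
      calc σk * σh⁻¹ ≤ σk * ((1 - εt) * σk)⁻¹ := by
            apply mul_le_mul_of_nonneg_left _ hσpos.le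
            exact inv_anti₀ (by positivity) h8
        _ = (1 - εt)⁻¹ := by
            rw [mul_inv]
            field_simp
    calc εt * σk * σh⁻¹ = εt * (σk * σh⁻¹) := by ring
      _ ≤ εt * (1 - εt)⁻¹ := mul_le_mul_of_nonneg_left hc hεnn
      _ = δ := by rw [hδdef, div_eq_mul_inv]
  have hdpos : ∀ i, 0 < dvec i := by
    intro i
    have h9 := (abs_le.mp (hdbound i)).1
    linarith
  have hsqne : ∀ i, Real.sqrt (dvec i) ≠ 0 := fun i => (Real.sqrt_pos.mpr (hdpos i)).ne'
  set Dih : Matrix (Fin k) (Fin k) ℝ :=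
    Matrix.diagonal (fun i => (Real.sqrt (dvec i))⁻¹) with hDih
  set Dh : Matrix (Fin k) (Fin k) ℝ := Matrix.diagonal (fun i => Real.sqrt (dvec i)) with hDh
  have hDihDh : Dih * Dh = 1 := by
    rw [hDih, hDh, Matrix.diagonal_mul_diagonal]
    have hfun : (fun i => (Real.sqrt (dvec i))⁻¹ * Real.sqrt (dvec i)) = fun _ : Fin k => (1:ℝ) := by
      funext i; exact inv_mul_cancel₀ (hsqne i)
    rw [hfun, Matrix.diagonal_one]
  have hDhDih : Dh * Dih = 1 := by
    rw [hDih, hDh, Matrix.diagonal_mul_diagonal]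
    have hfun : (fun i => Real.sqrt (dvec i) * (Real.sqrt (dvec i))⁻¹) = fun _ : Fin k => (1:ℝ) := by
      funext i; exact mul_inv_cancel₀ (hsqne i)
    rw [hfun, Matrix.diagonal_one]
  have conj_mul : ∀ X Y : Matrix (Fin k) (Fin k) ℝ,
      (U * X * Uᵀ) * (U * Y * Uᵀ) = U * (X * Y) * Uᵀ := by
    intro X Y
    calc (U * X * Uᵀ) * (U * Y * Uᵀ) = U * X * (Uᵀ * U) * Y * Uᵀ := by
          simp only [Matrix.mul_assoc]
      _ = U * (X * Y) * Uᵀ := by rw [hU, Matrix.mul_one, Matrix.mul_assoc U X Y]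
  set M := U * Dih * Uᵀ with hM
  set N := U * Dh * Uᵀ with hN
  have hMN : M * N = 1 := by
    rw [hM, hN, conj_mul, hDihDh, Matrix.mul_one, hUU]
  have hNM : N * M = 1 := by
    rw [hM, hN, conj_mul, hDhDih, Matrix.mul_one, hUU]
  have hWN : W * N = What := by
    rw [hW, hN]
    calc What * U * Dih * Uᵀ * (U * Dh * Uᵀ)
        = What * U * Dih * (Uᵀ * U) * Dh * Uᵀ := by simp only [Matrix.mul_assoc]
      _ = What * U * (Dih * Dh) * Uᵀ := by
          rw [hU, Matrix.mul_one, Matrix.mul_assoc (What * U) Dih Dh]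
      _ = What := by rw [hDihDh, Matrix.mul_one, Matrix.mul_assoc, hUU, Matrix.mul_one]
  have hWt : Wᵀ = U * Dih * Uᵀ * Whatᵀ := by
    rw [hW, hDih]
    simp [Matrix.transpose_mul, Matrix.diagonal_transpose, Matrix.transpose_transpose,
      Matrix.mul_assoc]
  have hDDD : Dih * Matrix.diagonal dvec * Dih = 1 := by
    rw [hDih, Matrix.diagonal_mul_diagonal, Matrix.diagonal_mul_diagonal]
    have hfun : (fun i => (Real.sqrt (dvec i))⁻¹ * dvec i * (Real.sqrt (dvec i))⁻¹)
        = fun _ : Fin k => (1:ℝ) := by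
      funext i
      have hs2 : Real.sqrt (dvec i) * Real.sqrt (dvec i) = dvec i :=
        Real.mul_self_sqrt (hdpos i).le
      calc (Real.sqrt (dvec i))⁻¹ * dvec i * (Real.sqrt (dvec i))⁻¹
          = dvec i * (Real.sqrt (dvec i) * Real.sqrt (dvec i))⁻¹ := by rw [mul_inv]; ring
        _ = dvec i * (dvec i)⁻¹ := by rw [hs2]
        _ = 1 := mul_inv_cancel₀ (hdpos i).ne'
    rw [hfun, Matrix.diagonal_one]
  have hWAW : Wᵀ * A * W = 1 := by
    rw [hWt, hW]
    calc U * Dih * Uᵀ * Whatᵀ * A * (What * U * Dih * Uᵀ)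
        = (U * Dih * Uᵀ) * (Whatᵀ * A * What) * (U * Dih * Uᵀ) := by
          simp only [Matrix.mul_assoc]
      _ = (U * Dih * Uᵀ) * (U * Matrix.diagonal dvec * Uᵀ) * (U * Dih * Uᵀ) := by
          rw [hdecomp]
      _ = U * (Dih * Matrix.diagonal dvec) * Uᵀ * (U * Dih * Uᵀ) := by rw [conj_mul]
      _ = U * (Dih * Matrix.diagonal dvec * Dih) * Uᵀ := by rw [conj_mul]
      _ = 1 := by rw [hDDD, Matrix.mul_one, hUU]
  have hWdagW : Wdag * W = 1 := left_inv_dag W Wdag (Wᵀ * A) hWAW hWdag.1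
  obtain ⟨p1, p2, p3, p4⟩ := hWdag
  have hBW : (M * Wdag) * (W * N) = 1 := by
    calc (M * Wdag) * (W * N) = M * ((Wdag * W) * N) := by simp only [Matrix.mul_assoc]
      _ = M * N := by rw [hWdagW, Matrix.one_mul]
      _ = 1 := hMN
  have hWB : (W * N) * (M * Wdag) = W * Wdag := by
    calc (W * N) * (M * Wdag) = W * ((N * M) * Wdag) := by simp only [Matrix.mul_assoc]
      _ = W * Wdag := by rw [hNM, Matrix.one_mul]
  have hpen : IsMoorePenrose What (M * Wdag) := by
    refine ⟨?_, ?_, ?_, ?_⟩ <;> rw [← hWN]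
    · rw [Matrix.mul_assoc (W * N) (M * Wdag) (W * N), hBW, Matrix.mul_one]
    · rw [hBW, Matrix.one_mul]
    · rw [hWB]; exact p3
    · rw [hBW]; exact Matrix.transpose_one
  have hWhatdag_eq : Whatdag = M * Wdag := mp_unique What Whatdag (M * Wdag) hWhatdag hpen
  have hdiff : Whatdag - Wdag = (U * (Dih - 1) * Uᵀ) * Wdag := by
    have h10 : U * (Dih - 1) * Uᵀ = M - 1 := by
      rw [Matrix.mul_sub, Matrix.sub_mul, Matrix.mul_one, hUU, ← hM]
    rw [hWhatdag_eq, h10, Matrix.sub_mul, Matrix.one_mul]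
  have hnormU : ‖U‖ = 1 := by
    have h6 : ‖Uᴴ * U‖ = ‖U‖ * ‖U‖ := Matrix.l2_opNorm_conjTranspose_mul_self U
    have h7 : Uᴴ = Uᵀ := by ext a b; simp [Matrix.conjTranspose_apply]
    rw [h7, hU, norm_one_mat hk] at h6
    have h8 : (‖U‖ - 1) * (‖U‖ + 1) = 0 := by linear_combination (-1 : ℝ) * h6
    rcases mul_eq_zero.mp h8 with h | h
    · linarith
    · linarith [norm_nonneg U]
  have hnormUt : ‖Uᵀ‖ = 1 := by
    have h6 : ‖(Uᵀ)ᴴ * Uᵀ‖ = ‖Uᵀ‖ * ‖Uᵀ‖ := Matrix.l2_opNorm_conjTranspose_mul_self Uᵀ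
    have h7 : (Uᵀ)ᴴ = U := by ext a b; simp [Matrix.conjTranspose_apply]
    rw [h7, hUU, norm_one_mat hk] at h6
    have h8 : (‖Uᵀ‖ - 1) * (‖Uᵀ‖ + 1) = 0 := by linear_combination (-1 : ℝ) * h6
    rcases mul_eq_zero.mp h8 with h | h
    · linarith
    · linarith [norm_nonneg Uᵀ]
  have hnormD : ‖Dih - 1‖ ≤ δ := by
    have h11 : Dih - 1 = Matrix.diagonal (fun i => (Real.sqrt (dvec i))⁻¹ - 1) := by
      rw [hDih, ← Matrix.diagonal_one]
      ext a b
      by_cases hab : a = b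
      · subst hab
        simp [Matrix.sub_apply, Matrix.diagonal_apply_eq]
      · simp [Matrix.sub_apply, Matrix.diagonal_apply_ne _ hab, Matrix.one_apply_ne hab]
    rw [h11]
    exact diagonal_norm_le _ δ hδ0 (fun i => inv_sqrt_close hδ0 hδhalf (hdbound i))
  have hle : ‖Whatdag - Wdag‖ ≤ δ * ‖Wdag‖ := by
    rw [hdiff]
    have b1 : ‖U * (Dih - 1) * Uᵀ‖ ≤ ‖U‖ * ‖Dih - 1‖ * ‖Uᵀ‖ := by
      calc ‖U * (Dih - 1) * Uᵀ‖ ≤ ‖U * (Dih - 1)‖ * ‖Uᵀ‖ := Matrix.l2_opNorm_mul _ _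
        _ ≤ ‖U‖ * ‖Dih - 1‖ * ‖Uᵀ‖ :=
            mul_le_mul_of_nonneg_right (Matrix.l2_opNorm_mul _ _) (norm_nonneg _)
    have b2 : ‖U * (Dih - 1) * Uᵀ‖ ≤ δ := by
      refine b1.trans ?_
      rw [hnormU, hnormUt, one_mul, mul_one]
      exact hnormD
    calc ‖U * (Dih - 1) * Uᵀ * Wdag‖ ≤ ‖U * (Dih - 1) * Uᵀ‖ * ‖Wdag‖ :=
          Matrix.l2_opNorm_mul _ _
      _ ≤ δ * ‖Wdag‖ := mul_le_mul_of_nonneg_right b2 (norm_nonneg _)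
  have hsqrt : 1 ≤ Real.sqrt (1 + εt) := by
    have h12 : Real.sqrt 1 ≤ Real.sqrt (1 + εt) := Real.sqrt_le_sqrt (by linarith)
    rwa [Real.sqrt_one] at h12
  rw [opNorm_eq, opNorm_eq]
  refine hle.trans ?_
  nlinarith [mul_nonneg (mul_nonneg (norm_nonneg Wdag) hδ0) (sub_nonneg.mpr hsqrt),
    norm_nonneg Wdag, hδ0]
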